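/- For every field k and every positive rational number r, there exists a finite-dimensional regular evolution k-algebra A such that |Aut(A)| / dim_k(A) = r, where Aut(A) is the group of k-algebra automorphisms of A. -/

import Mathlib

namespace EvoProofAux

variable {k : Type} [Field k] {n m : ℕ}

abbrev Idx (n m : ℕ) : Type := Fin n ⊕ Fin m

def eps (k : Type) [Field k] (n m : ℕ) : Idx n m → Idx n m → k
  | Sum.inr a, Sum.inr b => if (b : ℕ) = (a : ℕ) + 1 then 1 else 0
  | _, _ => 0

def sc (k : Type) [Field k] (n m : ℕ) (i j : Idx n m) : k :=
  (if i = j then 1 else 0) + eps k n m i j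

lemma sum_mul_eps_inl (g : Idx n m → k) (a : Fin n) :
    ∑ i, g i * eps k n m i (Sum.inl a) = 0 := by
  apply Finset.sum_eq_zero
  intro i _
  cases i <;> simp [eps]

lemma sum_mul_eps_inr (g : Idx n m → k) (b : Fin m) :
    ∑ i, g i * eps k n m i (Sum.inr b)
      = if h : 0 < (b : ℕ) then g (Sum.inr ⟨(b : ℕ) - 1, lt_of_le_of_lt (Nat.sub_le _ _) b.isLt⟩) else 0 := by
  split
  case isTrue h =>
    rw [Finset.sum_eq_single (Sum.inr ⟨(b : ℕ) - 1, lt_of_le_of_lt (Nat.sub_le _ _) b.isLt⟩)]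
    · simp [eps, Nat.sub_add_cancel h]
    · intro i _ hi
      cases i with
      | inl a => simp [eps]
      | inr a =>
        have : ¬ ((b : ℕ) = (a : ℕ) + 1) := by
          intro hba
          apply hi
          congr 1
          apply Fin.ext
          simp only [Fin.val_mk]
          omega
        simp [eps, this]
    · simp
  case isFalse h =>
    apply Finset.sum_eq_zero
    intro i _
    cases i with
    | inl a => simp [eps]
    | inr a => simp [eps]; intro hba; omega

lemma sum_mul_sc (g : Idx n m → k) (j : Idx n m) :
    ∑ i, g i * sc k n m i j = g j + ∑ i, g i * eps k n m i j := by
  simp only [sc, mul_add, Finset.sum_add_distrib]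
  congr 1
  simp [mul_ite, Finset.sum_ite_eq']

lemma rows_linearIndependent :
    LinearIndependent k (fun i => (sc k n m i : Idx n m → k)) := by
  rw [Fintype.linearIndependent_iff]
  intro g hg
  have hcoord : ∀ j : Idx n m, g j + ∑ i, g i * eps k n m i j = 0 := by
    intro j
    have h0 := congrFun hg j
    rw [Finset.sum_apply] at h0
    simp only [Pi.smul_apply, smul_eq_mul] at h0
    rw [sum_mul_sc] at h0
    exact h0
  have hinr : ∀ (t : ℕ) (ht : t < m), g (Sum.inr ⟨t, ht⟩) = 0 := by
    intro t
    induction t with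
    | zero =>
      intro ht
      have := hcoord (Sum.inr ⟨0, ht⟩)
      rw [sum_mul_eps_inr] at this
      simpa using this
    | succ t ih =>
      intro ht
      have := hcoord (Sum.inr ⟨t + 1, ht⟩)
      rw [sum_mul_eps_inr] at this
      simp only [Nat.succ_sub_one] at this
      rw [dif_pos (Nat.succ_pos t)] at this
      rw [ih (Nat.lt_of_succ_lt ht)] at this
      simpa using this
  intro i
  cases i with
  | inl a =>
    have := hcoord (Sum.inl a)
    rw [sum_mul_eps_inl] at this
    simpa using this
  | inr b => exact hinr b b.isLt


/-- the evolution algebra product on `Idx n m → k` -/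
def emul (k : Type) [Field k] (n m : ℕ) (x y : Idx n m → k) : Idx n m → k :=
  fun j => ∑ i, x i * y i * sc k n m i j

lemma eps_self (i : Idx n m) : eps k n m i i = 0 := by
  cases i with
  | inl a => rfl
  | inr a => simp [eps]

lemma sc_self (i : Idx n m) : sc k n m i i = 1 := by
  simp [sc, eps_self]

lemma emul_eq_sum (x y : Idx n m → k) :
    emul k n m x y = ∑ l, (x l * y l) • (sc k n m l) := by
  funext j
  simp [emul, Finset.sum_apply, mul_assoc]

lemma single_emul_single (i j : Idx n m) :
    emul k n m (Pi.single i 1) (Pi.single j 1)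
      = if i = j then (sc k n m i) else 0 := by
  rw [emul_eq_sum]
  rcases eq_or_ne i j with h | h
  · subst h
    simp only [if_pos rfl]
    rw [Finset.sum_eq_single i]
    · simp
    · intro b _ hb; simp [Pi.single_apply, hb]
    · simp
  · rw [if_neg h, Finset.sum_eq_zero]
    intro l _
    rcases eq_or_ne l i with rfl | hl
    · simp [Pi.single_apply, Ne.symm h]
    · simp [Pi.single_apply, hl]

/-- the permutation `σ` induces the linear automorphism `x ↦ x ∘ σ` -/
def permLinEquiv (σ : Equiv.Perm (Idx n m)) : (Idx n m → k) ≃ₗ[k] (Idx n m → k) where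
  toFun x := x ∘ σ
  invFun x := x ∘ σ.symm
  map_add' _ _ := rfl
  map_smul' _ _ := rfl
  left_inv x := by funext l; simp
  right_inv x := by funext l; simp

lemma permLinEquiv_mul (σ : Equiv.Perm (Idx n m))
    (hσ : ∀ j l, sc k n m (σ j) (σ l) = sc k n m j l) (x y : Idx n m → k) :
    permLinEquiv σ (emul k n m x y) = emul k n m (permLinEquiv σ x) (permLinEquiv σ y) := by
  funext l
  show (emul k n m x y) (σ l) = ∑ i, x (σ i) * y (σ i) * sc k n m i l
  have h2 : ∀ i, x (σ i) * y (σ i) * sc k n m i l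
      = (fun j => x j * y j * sc k n m (σ.symm j) l) (σ i) := by
    intro i; simp
  calc (emul k n m x y) (σ l) = ∑ j, x j * y j * sc k n m j (σ l) := rfl
    _ = ∑ j, x j * y j * sc k n m (σ.symm j) l := by
        apply Finset.sum_congr rfl
        intro j _
        have := hσ (σ.symm j) l
        rw [Equiv.apply_symm_apply] at this
        rw [this]
    _ = ∑ i, x (σ i) * y (σ i) * sc k n m i l := by
        rw [← Equiv.sum_comp σ (fun j => x j * y j * sc k n m (σ.symm j) l)]
        apply Finset.sum_congr rfl
        intro i _
        simp

/-- expansion of a linear map in coordinates -/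
lemma linear_expand (φ : (Idx n m → k) →ₗ[k] (Idx n m → k)) (x : Idx n m → k) (l : Idx n m) :
    φ x l = ∑ i, x i * φ (Pi.single i 1) l := by
  conv_lhs => rw [← Finset.univ_sum_single x]
  rw [map_sum, Finset.sum_apply]
  apply Finset.sum_congr rfl
  intro i _
  have : Pi.single i (x i) = (x i) • (Pi.single i 1 : Idx n m → k) := by
    funext j
    rcases eq_or_ne j i with rfl | hj
    · simp
    · simp [Pi.single_apply, hj]
  rw [this, map_smul]
  simp


lemma eps_from_inl (a : Fin n) (y : Idx n m) : eps k n m (Sum.inl a) y = 0 := by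
  cases y <;> rfl

lemma eps_inr_inr (a b : Fin m) :
    eps k n m (Sum.inr a) (Sum.inr b) = if (b : ℕ) = (a : ℕ) + 1 then 1 else 0 := rfl

lemma eps_to_zero (x : Idx n m) (h0 : 0 < m) : eps k n m x (Sum.inr ⟨0, h0⟩) = 0 := by
  cases x with
  | inl a => exact eps_from_inl a _
  | inr c => simp [eps_inr_inr]

lemma goodPerm_card (hm : 2 ≤ m) :
    Nat.card {σ : Equiv.Perm (Idx n m) // ∀ j l, sc k n m (σ j) (σ l) = sc k n m j l}
      = n.factorial := by
  classical
  have h0m : 0 < m := by omega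
  have h1m : 1 < m := by omega
  have hF : Function.Bijective (fun π : Equiv.Perm (Fin n) =>
      (⟨Equiv.sumCongr π (Equiv.refl (Fin m)), by
        intro j l
        unfold sc
        congr 1
        · rcases eq_or_ne j l with rfl | hne
          · simp
          · rw [if_neg hne,
              if_neg (fun h => hne ((Equiv.sumCongr π (Equiv.refl (Fin m))).injective h))]
        · cases j <;> cases l <;> simp [eps, Equiv.sumCongr_apply]
       ⟩ : {σ : Equiv.Perm (Idx n m) // ∀ j l, sc k n m (σ j) (σ l) = sc k n m j l})) := by
    constructor
    · intro π π' h
      simp only [Subtype.mk.injEq] at h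
      apply Equiv.ext
      intro a
      have := congrFun (congrArg (fun (e : Equiv.Perm (Idx n m)) => (e : Idx n m → Idx n m)) h)
        (Sum.inl a)
      simpa using this
    · rintro ⟨σ, hσ⟩
      have heps : ∀ i j, eps k n m (σ i) (σ j) = eps k n m i j := by
        intro i j
        have h := hσ i j
        unfold sc at h
        have hδ : (if σ i = σ j then (1:k) else 0) = (if i = j then 1 else 0) := by
          simp [Equiv.apply_eq_iff_eq]
        rw [hδ] at h
        exact add_left_cancel h
      -- σ fixes the path part
      have hfix : ∀ (t : ℕ) (ht : t < m), σ (Sum.inr ⟨t, ht⟩) = Sum.inr ⟨t, ht⟩ := by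
        intro t
        induction t with
        | zero =>
          intro ht
          -- σ (inr 0) has an outgoing edge
          have h01 : eps k n m (σ (Sum.inr ⟨0, ht⟩)) (σ (Sum.inr ⟨1, h1m⟩)) = 1 := by
            rw [heps, eps_inr_inr]
            simp
          obtain ⟨a, ha⟩ : ∃ a : Fin m, σ (Sum.inr ⟨0, ht⟩) = Sum.inr a := by
            cases hc : σ (Sum.inr ⟨0, ht⟩) with
            | inl x =>
              rw [hc, eps_from_inl] at h01
              exact absurd h01 (by norm_num)
            | inr a => exact ⟨a, rfl⟩
          -- a must be 0, else σ (inr 0) would have an incoming edge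
          have ha0 : (a : ℕ) = 0 := by
            by_contra hane
            have hpos : 0 < (a : ℕ) := Nat.pos_of_ne_zero hane
            have hlt : (a : ℕ) - 1 < m := lt_of_le_of_lt (Nat.sub_le _ _) a.isLt
            have h2 := heps (σ.symm (Sum.inr ⟨(a : ℕ) - 1, hlt⟩)) (Sum.inr ⟨0, ht⟩)
            rw [Equiv.apply_symm_apply, ha] at h2
            rw [eps_inr_inr] at h2
            simp only [Fin.val_mk] at h2
            rw [if_pos (by omega), eps_to_zero _ h0m] at h2
            exact one_ne_zero h2
          rw [ha]
          congr 1
          exact Fin.ext ha0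
        | succ t ih =>
          intro ht
          have htm : t < m := Nat.lt_of_succ_lt ht
          have h01 : eps k n m (σ (Sum.inr ⟨t, htm⟩)) (σ (Sum.inr ⟨t + 1, ht⟩)) = 1 := by
            rw [heps, eps_inr_inr]
            simp
          rw [ih htm] at h01
          cases hc : σ (Sum.inr ⟨t + 1, ht⟩) with
          | inl x =>
            rw [hc] at h01
            have : eps k n m (Sum.inr (⟨t, htm⟩ : Fin m)) (Sum.inl x) = 0 := rfl
            rw [this] at h01
            exact absurd h01 (by norm_num)
          | inr b =>
            rw [hc, eps_inr_inr] at h01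
            simp only [Fin.val_mk] at h01
            have hb : (b : ℕ) = t + 1 := by
              by_contra hbne
              rw [if_neg hbne] at h01
              exact absurd h01 (by norm_num)
            congr 1
            exact Fin.ext hb
      -- σ maps the free part to itself
      have hinl : ∀ a : Fin n, ∃ b : Fin n, σ (Sum.inl a) = Sum.inl b := by
        intro a
        cases hc : σ (Sum.inl a) with
        | inl b => exact ⟨b, rfl⟩
        | inr c =>
          exfalso
          have h1 : σ (Sum.inr c) = Sum.inr c := by
            have := hfix (c : ℕ) c.isLt
            simpa [Fin.eta] using this
          have := σ.injective (hc.trans h1.symm)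
          simp at this
      have hinj : Function.Injective (fun a : Fin n => (hinl a).choose) := by
        intro a a' h
        have h1 := (hinl a).choose_spec
        have h2 := (hinl a').choose_spec
        have h3 : σ (Sum.inl a) = σ (Sum.inl a') := by
          rw [h1, h2]
          simp only at h
          rw [h]
        simpa using σ.injective h3
      refine ⟨Equiv.ofBijective _ (Finite.injective_iff_bijective.mp hinj), ?_⟩
      apply Subtype.ext
      apply Equiv.ext
      intro x
      cases x with
      | inl a =>
        show Sum.inl ((hinl a).choose) = σ (Sum.inl a)
        exact ((hinl a).choose_spec).symm
      | inr b =>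
        show Sum.inr b = σ (Sum.inr b)
        have := hfix (b : ℕ) b.isLt
        simp only [Fin.eta] at this
        exact this.symm
  rw [← Nat.card_eq_of_bijective _ hF, Nat.card_eq_fintype_card, Fintype.card_perm,
    Fintype.card_fin]


def Mmat (φ : (Idx n m → k) ≃ₗ[k] (Idx n m → k)) (i l : Idx n m) : k :=
  φ (Pi.single i 1) l

set_option maxHeartbeats 2000000 in
lemma aut_card (hm : 2 ≤ m) :
    Nat.card {φ : (Idx n m → k) ≃ₗ[k] (Idx n m → k) //
        ∀ a b, φ (emul k n m a b) = emul k n m (φ a) (φ b)} = n.factorial := by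
  classical
  have hF : Function.Bijective
      (fun σp : {σ : Equiv.Perm (Idx n m) // ∀ j l, sc k n m (σ j) (σ l) = sc k n m j l} =>
        (⟨permLinEquiv σp.1, permLinEquiv_mul σp.1 σp.2⟩ :
          {φ : (Idx n m → k) ≃ₗ[k] (Idx n m → k) //
            ∀ a b, φ (emul k n m a b) = emul k n m (φ a) (φ b)})) := by
    constructor
    · rintro ⟨σ, hσ⟩ ⟨σ', hσ'⟩ h
      simp only [Subtype.mk.injEq] at h
      apply Subtype.ext
      show σ = σ'
      apply Equiv.ext
      intro l
      have happ : ∀ x : Idx n m → k, x (σ l) = x (σ' l) := by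
        intro x
        have := LinearEquiv.congr_fun h x
        exact congrFun this l
      have h1 := happ (Pi.single (σ l) 1)
      rw [Pi.single_eq_same, Pi.single_apply] at h1
      by_contra hne
      rw [if_neg (fun hh => hne (hh.symm : σ l = σ' l))] at h1
      exact one_ne_zero h1
    · rintro ⟨φ, hφ⟩
      have hMdef : ∀ i l, Mmat φ i l = φ (Pi.single i 1) l := fun i l => rfl
      set M : Idx n m → Idx n m → k := Mmat φ with hMset
      have hexp : ∀ (x : Idx n m → k) (l : Idx n m), φ x l = ∑ i, x i * M i l := by
        intro x l
        have h1 := linear_expand (φ : (Idx n m → k) →ₗ[k] (Idx n m → k)) x l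
        simp only [LinearEquiv.coe_coe] at h1
        exact h1
      -- Step A : orthogonality of distinct images
      have stepA : ∀ i j, i ≠ j → ∀ l, M i l * M j l = 0 := by
        intro i j hij
        have h0 : (∑ l, (M i l * M j l) • (sc k n m l : Idx n m → k)) = 0 := by
          calc ∑ l, (M i l * M j l) • (sc k n m l : Idx n m → k)
              = emul k n m (φ (Pi.single i 1)) (φ (Pi.single j 1)) := (emul_eq_sum _ _).symm
            _ = φ (emul k n m (Pi.single i 1) (Pi.single j 1)) := (hφ _ _).symm
            _ = 0 := by rw [single_emul_single, if_neg hij, map_zero]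
        have li := rows_linearIndependent (k := k) (n := n) (m := m)
        rw [Fintype.linearIndependent_iff] at li
        exact li _ h0
      -- Step B : each column has a nonzero entry
      have stepEx : ∀ l, ∃ i, M i l ≠ 0 := by
        intro l
        by_contra hc
        push_neg at hc
        have hx : (1 : k) = ∑ i, (φ.symm (Pi.single l 1)) i * M i l := by
          have h1 := hexp (φ.symm (Pi.single l 1)) l
          rw [φ.apply_symm_apply] at h1
          rw [← h1, Pi.single_eq_same]
        rw [Finset.sum_eq_zero (fun i _ => by rw [hc i, mul_zero])] at hx
        exact one_ne_zero hx
      set σ0 : Idx n m → Idx n m := fun l => (stepEx l).choose with hσ0def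
      have hσ0 : ∀ l, M (σ0 l) l ≠ 0 := fun l => (stepEx l).choose_spec
      have huniq : ∀ l i, M i l ≠ 0 → i = σ0 l := by
        intro l i hi
        by_contra hne
        exact hσ0 l (by
          have := stepA i (σ0 l) hne l
          rcases mul_eq_zero.mp this with h | h
          · exact absurd h hi
          · exact h)
      have hsurj : Function.Surjective σ0 := by
        intro i
        have hne : φ (Pi.single i 1) ≠ 0 := by
          intro h0
          have h1 : (Pi.single i 1 : Idx n m → k) = 0 := by
            have h2 := congrArg φ.symm h0
            simpa using h2
          have h3 := congrFun h1 i
          rw [Pi.single_eq_same] at h3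
          exact one_ne_zero h3
        obtain ⟨l, hl⟩ : ∃ l, M i l ≠ 0 := by
          by_contra hc
          push_neg at hc
          exact hne (funext fun l => hc l)
        exact ⟨l, (huniq l i hl).symm⟩
      have hbij : Function.Bijective σ0 := Finite.surjective_iff_bijective.mp hsurj
      have hinj0 : Function.Injective σ0 := hbij.1
      have M_eq : ∀ i l, M i l = if σ0 l = i then M (σ0 l) l else 0 := by
        intro i l
        rcases eq_or_ne (σ0 l) i with rfl | hne
        · rw [if_pos rfl]
        · rw [if_neg hne]
          by_contra hMne
          exact hne ((huniq l i hMne) ▸ rfl)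
      -- squares condition
      have hsq : ∀ i l', (∑ l, (M i l * M i l) * sc k n m l l')
          = sc k n m i (σ0 l') * M (σ0 l') l' := by
        intro i l'
        have h1 := hφ (Pi.single i 1) (Pi.single i 1)
        rw [single_emul_single, if_pos rfl] at h1
        have h2 := congrFun h1 l'
        have hL : φ (sc k n m i) l' = sc k n m i (σ0 l') * M (σ0 l') l' := by
          rw [hexp]
          calc ∑ j, sc k n m i j * M j l'
              = ∑ j, (if σ0 l' = j then sc k n m i j * M (σ0 l') l' else 0) := by
                apply Finset.sum_congr rfl
                intro j _
                rw [M_eq j l']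
                split <;> simp
            _ = sc k n m i (σ0 l') * M (σ0 l') l' := by
                rw [Finset.sum_ite_eq]
                simp
        have hR : emul k n m (φ (Pi.single i 1)) (φ (Pi.single i 1)) l'
            = ∑ l, (M i l * M i l) * sc k n m l l' := rfl
        rw [hL] at h2
        rw [hR] at h2
        exact h2.symm
      have hstar : ∀ j l', M (σ0 j) j * M (σ0 j) j * sc k n m j l'
          = sc k n m (σ0 j) (σ0 l') * M (σ0 l') l' := by
        intro j l'
        have h1 := hsq (σ0 j) l'
        rw [Finset.sum_eq_single j] at h1
        · exact h1
        · intro b _ hb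
          have hzero : M (σ0 j) b = 0 := by
            rw [M_eq]
            rw [if_neg (fun h => hb (hinj0 h))]
          rw [hzero, mul_zero, zero_mul]
        · simp
      have ht1 : ∀ j, M (σ0 j) j = 1 := by
        intro j
        have h1 := hstar j j
        rw [sc_self, sc_self, mul_one, one_mul] at h1
        exact mul_right_cancel₀ (hσ0 j) (h1.trans (one_mul _).symm)
      have hcond : ∀ j l, sc k n m (σ0 j) (σ0 l) = sc k n m j l := by
        intro j l
        have h1 := hstar j l
        rw [ht1 j, ht1 l] at h1
        simpa using h1.symm
      have σe : Equiv.Perm (Idx n m) := Equiv.ofBijective σ0 hbij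
      refine ⟨⟨Equiv.ofBijective σ0 hbij, fun j l => hcond j l⟩, ?_⟩
      apply Subtype.ext
      apply LinearEquiv.toLinearMap_injective
      apply LinearMap.ext
      intro x
      funext l
      show x (σ0 l) = φ x l
      rw [hexp]
      calc x (σ0 l) = ∑ i, (if σ0 l = i then x i else 0) := by
            rw [Finset.sum_ite_eq]; simp
        _ = ∑ i, x i * M i l := by
            apply Finset.sum_congr rfl
            intro i _
            rw [M_eq i l, ht1 l]
            split
            · rw [mul_one]
            · rw [mul_zero]
  rw [← Nat.card_eq_of_bijective _ hF, goodPerm_card hm]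


lemma add_three_le_factorial {a : ℕ} (ha : 4 ≤ a) : a + 3 ≤ a.factorial := by
  induction a, ha using Nat.le_induction with
  | base => decide
  | succ a ha ih =>
    calc a + 1 + 3 ≤ 2 * (a + 3) := by omega
      _ ≤ 2 * a.factorial := Nat.mul_le_mul_left 2 ih
      _ ≤ (a + 1) * a.factorial := Nat.mul_le_mul_right _ (by omega)
      _ = (a + 1).factorial := (Nat.factorial_succ a).symm

end EvoProofAux

open EvoProofAux in
theorem exists_regular_evolution_algebra_aut_card_div_dim_eq
    (k : Type) [Field k] (r : ℚ) (hr : 0 < r) :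
    ∃ (A : Type) (_ : AddCommGroup A) (_ : Module k A) (_ : Mul A),
      (∀ a b c : A, (a + b) * c = a * c + b * c) ∧
      (∀ a b c : A, a * (b + c) = a * b + a * c) ∧
      (∀ (c : k) (a b : A), (c • a) * b = c • (a * b)) ∧
      (∀ (c : k) (a b : A), a * (c • b) = c • (a * b)) ∧
      FiniteDimensional k A ∧
      (∃ (ι : Type) (_ : Fintype ι) (B : Module.Basis ι k A),
        ∀ i j : ι, i ≠ j → B i * B j = 0) ∧
      Submodule.span k {x : A | ∃ a b : A, x = a * b} = ⊤ ∧
      (Nat.card {φ : A ≃ₗ[k] A // ∀ a b : A, φ (a * b) = φ a * φ b} : ℚ) /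
          (Module.finrank k A : ℚ) = r := by
  classical
  -- numeric choices
  have hnum : 0 < r.num := Rat.num_pos.mpr hr
  set p : ℕ := r.num.toNat with hpdef
  set q : ℕ := r.den with hqdef
  have hp0 : 0 < p := by rw [hpdef]; omega
  have hq0 : 0 < q := r.pos
  set n : ℕ := p + 5 with hndef
  have hpn : p ∣ n.factorial * q :=
    Dvd.dvd.mul_right (Nat.dvd_factorial hp0 (by omega)) q
  set D : ℕ := n.factorial * q / p with hDdef
  have hDp : p * D = n.factorial * q := Nat.mul_div_cancel' hpn
  have hfac : n + 2 ≤ (n - 1).factorial := by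
    have h4 : 4 ≤ n - 1 := by omega
    have := add_three_le_factorial h4
    omega
  have hD1 : (n - 1).factorial ≤ D := by
    have hfac' : n.factorial = n * (n - 1).factorial := by
      conv_lhs => rw [show n = (n - 1) + 1 by omega]
      rw [Nat.factorial_succ, show n - 1 + 1 = n from by omega]
    have e1 : (n - 1).factorial = n.factorial / n := by
      rw [hfac', Nat.mul_div_cancel_left _ (by omega : 0 < n)]
    have e2 : n.factorial / n ≤ n.factorial / p :=
      Nat.div_le_div_left (by omega) hp0
    have e3 : n.factorial / p ≤ n.factorial * q / p :=
      Nat.div_le_div_right (Nat.le_mul_of_pos_right _ hq0)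
    rw [e1]
    exact le_trans e2 e3
  have hnD : n + 2 ≤ D := le_trans hfac hD1
  set m : ℕ := D - n with hmdef
  have hm2 : 2 ≤ m := by omega
  have hnm : n + m = D := by omega
  haveI : NeZero n := ⟨by omega⟩
  -- the algebra
  refine ⟨(Idx n m → k), inferInstance, inferInstance, ⟨emul k n m⟩,
    ?_, ?_, ?_, ?_, inferInstance, ?_, ?_, ?_⟩
  · intro a b c
    show emul k n m (a + b) c = emul k n m a c + emul k n m b c
    funext j
    simp [emul, add_mul, Finset.sum_add_distrib]
  · intro a b c
    show emul k n m a (b + c) = emul k n m a b + emul k n m a c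
    funext j
    simp [emul, mul_add, add_mul, Finset.sum_add_distrib]
  · intro c a b
    show emul k n m (c • a) b = c • emul k n m a b
    funext j
    rw [Pi.smul_apply, emul, emul, smul_eq_mul, Finset.mul_sum]
    apply Finset.sum_congr rfl
    intro i _
    rw [Pi.smul_apply, smul_eq_mul]
    ring
  · intro c a b
    show emul k n m a (c • b) = c • emul k n m a b
    funext j
    rw [Pi.smul_apply, emul, emul, smul_eq_mul, Finset.mul_sum]
    apply Finset.sum_congr rfl
    intro i _
    rw [Pi.smul_apply, smul_eq_mul]
    ring
  · refine ⟨Idx n m, inferInstance, Pi.basisFun k (Idx n m), ?_⟩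
    intro i j hij
    show emul k n m (Pi.basisFun k (Idx n m) i) (Pi.basisFun k (Idx n m) j) = 0
    rw [Pi.basisFun_apply, Pi.basisFun_apply, single_emul_single, if_neg hij]
  · -- regularity
    have hcard : Fintype.card (Idx n m) = Module.finrank k (Idx n m → k) := by
      rw [Module.finrank_pi]
    have hspan : Submodule.span k (Set.range fun i => (sc k n m i : Idx n m → k)) = ⊤ := by
      have h := (basisOfLinearIndependentOfCardEqFinrank
        (rows_linearIndependent (k := k) (n := n) (m := m)) hcard).span_eq
      rwa [coe_basisOfLinearIndependentOfCardEqFinrank] at h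
    apply eq_top_iff.mpr
    rw [← hspan]
    apply Submodule.span_mono
    rintro x ⟨i, rfl⟩
    refine ⟨Pi.single i 1, Pi.single i 1, ?_⟩
    show (sc k n m i : Idx n m → k) = emul k n m (Pi.single i 1) (Pi.single i 1)
    rw [single_emul_single, if_pos rfl]
  · -- the count
    show (Nat.card {φ : (Idx n m → k) ≃ₗ[k] (Idx n m → k) //
        ∀ a b, φ (emul k n m a b) = emul k n m (φ a) (φ b)} : ℚ) /
        (Module.finrank k (Idx n m → k) : ℚ) = r
    rw [aut_card hm2, Module.finrank_pi]
    have hcard2 : Fintype.card (Idx n m) = n + m := by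
      simp [Fintype.card_sum]
    rw [hcard2, hnm]
    have hD0 : 0 < D := by omega
    have hcast : (p : ℚ) * (D : ℚ) = (n.factorial : ℚ) * (q : ℚ) := by
      exact_mod_cast congrArg (fun t : ℕ => (t : ℚ)) hDp
    have hr' : r = (p : ℚ) / (q : ℚ) := by
      rw [← Rat.num_div_den r]
      congr 1
      · rw [hpdef]
        exact_mod_cast (Int.toNat_of_nonneg (le_of_lt hnum)).symm
    rw [hr']
    rw [div_eq_div_iff (by exact_mod_cast hD0.ne') (by exact_mod_cast hq0.ne')]
    rw [← hcast]
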